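/- Let Γ ∈ (1,2], v, v* in the open unit ball of ℝ^d, and define φ(x) = x^{-Γ} - (Γ/(Γ-1))·(√(1-‖v*‖²)/√(1-‖v‖²))·x^{-Γ+1} + Γ(1 - v·v*)/((Γ-1)(1-‖v‖²)) - 1 for x > 0. Then φ attains its minimum over (0,∞) at x_s = √(1-‖v‖²)/√(1-‖v*‖²), and φ(x_s) ≥ 0. -/
import Mathlib


open scoped RealInnerProductSpace

/-- Key pointwise lower bound: for `k, x > 0` and `Γ > 1`,
`x ^ (-Γ) - (Γ/(Γ-1)) * k * x ^ (-Γ+1) ≥ -(k^Γ)/(Γ-1)`. -/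
lemma phi_aux_lower (Γ : ℝ) (hΓ1 : 1 < Γ) {k x : ℝ} (hk : 0 < k) (hx : 0 < x) :
    -(k ^ Γ / (Γ - 1)) ≤ x ^ (-Γ) - Γ / (Γ - 1) * k * x ^ (-Γ + 1) := by
  have hΓ0 : (0:ℝ) < Γ - 1 := by linarith
  have hbern : 1 + Γ * (k * x - 1) ≤ (k * x) ^ Γ := by
    have := one_add_mul_self_le_rpow_one_add (s := k * x - 1)
      (by nlinarith [mul_pos hk hx]) hΓ1.le
    simpa using this
  have hmul : (k * x) ^ Γ = k ^ Γ * x ^ Γ := Real.mul_rpow hk.le hx.le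
  have hXpos : 0 < x ^ Γ := Real.rpow_pos_of_pos hx Γ
  have hKpos : 0 < k ^ Γ := Real.rpow_pos_of_pos hk Γ
  have hxneg : x ^ (-Γ) = (x ^ Γ)⁻¹ := Real.rpow_neg hx.le Γ
  have hxneg1 : x ^ (-Γ + 1) = (x ^ Γ)⁻¹ * x := by
    rw [Real.rpow_add hx, Real.rpow_one, hxneg]
  rw [hmul] at hbern
  rw [hxneg, hxneg1]
  have h1 : Γ * (k * x) - (Γ - 1) ≤ k ^ Γ * x ^ Γ := by
    have : Γ * (k * x - 1) = Γ * (k * x) - Γ := by ring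
    linarith
  have h2 := mul_le_mul_of_nonneg_right h1 (le_of_lt (inv_pos.2 hXpos))
  have h3 : (Γ * (k * x) - (Γ - 1)) * (x ^ Γ)⁻¹
      = Γ * k * ((x ^ Γ)⁻¹ * x) - (Γ - 1) * (x ^ Γ)⁻¹ := by ring
  have h4 : k ^ Γ * x ^ Γ * (x ^ Γ)⁻¹ = k ^ Γ := by
    rw [mul_assoc, mul_inv_cancel₀ hXpos.ne', mul_one]
  rw [h3, h4] at h2
  rw [← sub_nonneg]
  have h6 : (x ^ Γ)⁻¹ - Γ / (Γ - 1) * k * ((x ^ Γ)⁻¹ * x) - -(k ^ Γ / (Γ - 1))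
      = (k ^ Γ - (Γ * k * ((x ^ Γ)⁻¹ * x) - (Γ - 1) * (x ^ Γ)⁻¹)) / (Γ - 1) := by
    field_simp
    ring
  rw [h6]
  exact div_nonneg (by linarith) hΓ0.le

/-- `k * k ^ (Γ - 1) = k ^ Γ` for `k > 0`. -/
lemma phi_aux_rpow_split (Γ : ℝ) {k : ℝ} (hk : 0 < k) : k * k ^ (Γ - 1) = k ^ Γ := by
  nth_rewrite 1 [← Real.rpow_one k]
  rw [← Real.rpow_add hk]
  congr 1
  ring

/-- Value of the power part at the minimizer `k⁻¹`. -/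
lemma phi_aux_val (Γ : ℝ) (hΓ1 : 1 < Γ) {k : ℝ} (hk : 0 < k) :
    (k⁻¹) ^ (-Γ) - Γ / (Γ - 1) * k * (k⁻¹) ^ (-Γ + 1) = -(k ^ Γ / (Γ - 1)) := by
  have hΓ0 : (0:ℝ) < Γ - 1 := by linarith
  have h1 : (k⁻¹) ^ (-Γ) = k ^ Γ := by
    rw [Real.inv_rpow hk.le, Real.rpow_neg hk.le, inv_inv]
  have h2 : (k⁻¹) ^ (-Γ + 1) = k ^ (Γ - 1) := by
    rw [Real.inv_rpow hk.le, ← Real.rpow_neg hk.le]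
    congr 1
    ring
  rw [h1, h2, mul_assoc, phi_aux_rpow_split Γ hk]
  field_simp
  ring

/-- Nonnegativity of the minimal value, stated for plain real numbers. -/
lemma phi_aux_nonneg_real (Γ p q I : ℝ) (hΓ1 : 1 < Γ) (hΓ2 : Γ ≤ 2)
    (hp0 : 0 ≤ p) (hp1 : p < 1) (hq0 : 0 ≤ q) (hq1 : q < 1) (hI : I ≤ p * q) :
    0 ≤ -((Real.sqrt (1 - q ^ 2) / Real.sqrt (1 - p ^ 2)) ^ Γ / (Γ - 1))
      + Γ * (1 - I) / ((Γ - 1) * (1 - p ^ 2)) - 1 := by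
  have hΓ0 : (0:ℝ) < Γ - 1 := by linarith
  have hA : (0:ℝ) < 1 - p ^ 2 := by nlinarith
  have hB : (0:ℝ) < 1 - q ^ 2 := by nlinarith
  have ha : 0 < Real.sqrt (1 - p ^ 2) := Real.sqrt_pos.2 hA
  have hb : 0 < Real.sqrt (1 - q ^ 2) := Real.sqrt_pos.2 hB
  set a := Real.sqrt (1 - p ^ 2) with hadef
  set b := Real.sqrt (1 - q ^ 2) with hbdef
  have ha2 : a ^ 2 = 1 - p ^ 2 := Real.sq_sqrt hA.le
  have hb2 : b ^ 2 = 1 - q ^ 2 := Real.sq_sqrt hB.le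
  set k : ℝ := b / a with hkdef
  have hk : 0 < k := div_pos hb ha
  -- 1 - p*q ≥ a*b
  have hab : a * b ≤ 1 - p * q := by
    have h4 : (1 - p ^ 2) * (1 - q ^ 2) ≤ (1 - p * q) ^ 2 := by nlinarith [sq_nonneg (p - q)]
    have h5 : a * b = Real.sqrt ((1 - p ^ 2) * (1 - q ^ 2)) := (Real.sqrt_mul hA.le _).symm
    have h6 : (0:ℝ) ≤ 1 - p * q := by nlinarith
    calc a * b = Real.sqrt ((1 - p ^ 2) * (1 - q ^ 2)) := h5
      _ ≤ Real.sqrt ((1 - p * q) ^ 2) := Real.sqrt_le_sqrt h4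
      _ = 1 - p * q := Real.sqrt_sq h6
  set c : ℝ := (1 - I) / (1 - p ^ 2) with hcdef
  have hc1 : k ≤ c := by
    rw [hkdef, hcdef, div_le_div_iff₀ ha hA]
    have e : b * (1 - p ^ 2) = a * b * a := by rw [← ha2]; ring
    rw [e]
    nlinarith
  have hc2 : 1 + k ^ 2 ≤ 2 * c := by
    have hk2 : k ^ 2 = (1 - q ^ 2) / (1 - p ^ 2) := by
      rw [hkdef, div_pow, ha2, hb2]
    have e1 : 1 + (1 - q ^ 2) / (1 - p ^ 2) = (2 - p ^ 2 - q ^ 2) / (1 - p ^ 2) := by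
      field_simp
      ring
    have e2 : 2 * ((1 - I) / (1 - p ^ 2)) = (2 * (1 - I)) / (1 - p ^ 2) := by ring
    rw [hk2, hcdef, e1, e2, div_le_div_iff₀ hA hA]
    have h7 : 0 ≤ p ^ 2 + q ^ 2 - 2 * I := by nlinarith [sq_nonneg (p - q)]
    nlinarith [mul_nonneg h7 hA.le]
  -- convexity bound: k^Γ ≤ (2-Γ)k + (Γ-1)k²
  have hconv : k ^ Γ ≤ (2 - Γ) * k + (Γ - 1) * k ^ 2 := by
    have hgm := Real.geom_mean_le_arith_mean2_weighted (w₁ := 2 - Γ) (w₂ := Γ - 1)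
      (p₁ := 1) (p₂ := k) (by linarith) (by linarith) zero_le_one hk.le (by ring)
    rw [Real.one_rpow, one_mul] at hgm
    calc k ^ Γ = k * k ^ (Γ - 1) := (phi_aux_rpow_split Γ hk).symm
      _ ≤ k * ((2 - Γ) * 1 + (Γ - 1) * k) := mul_le_mul_of_nonneg_left hgm hk.le
      _ = (2 - Γ) * k + (Γ - 1) * k ^ 2 := by ring
  have hrw : Γ * (1 - I) / ((Γ - 1) * (1 - p ^ 2)) = Γ * c / (Γ - 1) := by
    rw [hcdef, ← mul_div_assoc, div_div, mul_comm (1 - p ^ 2) (Γ - 1)]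
  rw [hrw]
  have key : 0 ≤ Γ * c - (Γ - 1) - k ^ Γ := by
    nlinarith [mul_nonneg (by linarith : (0:ℝ) ≤ 2 - Γ) (by linarith : (0:ℝ) ≤ c - k),
      mul_nonneg hΓ0.le (by linarith : (0:ℝ) ≤ 2 * c - 1 - k ^ 2)]
  have e3 : -(k ^ Γ / (Γ - 1)) + Γ * c / (Γ - 1) - 1
      = (Γ * c - (Γ - 1) - k ^ Γ) / (Γ - 1) := by field_simp; ring
  rw [e3]
  exact div_nonneg key hΓ0.le

theorem phi_aux_min_nonneg {d : ℕ} (Γ : ℝ) (hΓ1 : 1 < Γ) (hΓ2 : Γ ≤ 2)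
    (v vs : EuclideanSpace ℝ (Fin d)) (hv : ‖v‖ < 1) (hvs : ‖vs‖ < 1) :
    let φ : ℝ → ℝ := fun x =>
      x ^ (-Γ) - Γ / (Γ - 1) * (Real.sqrt (1 - ‖vs‖^2) / Real.sqrt (1 - ‖v‖^2)) * x ^ (-Γ + 1)
        + Γ * (1 - ⟪v, vs⟫) / ((Γ - 1) * (1 - ‖v‖^2)) - 1
    let xs : ℝ := Real.sqrt (1 - ‖v‖^2) / Real.sqrt (1 - ‖vs‖^2)
    (∀ x : ℝ, 0 < x → φ xs ≤ φ x) ∧ 0 ≤ φ xs := by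
  intro φ xs
  have hp0 : 0 ≤ ‖v‖ := norm_nonneg v
  have hq0 : 0 ≤ ‖vs‖ := norm_nonneg vs
  have hA : (0:ℝ) < 1 - ‖v‖ ^ 2 := by nlinarith
  have hB : (0:ℝ) < 1 - ‖vs‖ ^ 2 := by nlinarith
  have ha : 0 < Real.sqrt (1 - ‖v‖ ^ 2) := Real.sqrt_pos.2 hA
  have hb : 0 < Real.sqrt (1 - ‖vs‖ ^ 2) := Real.sqrt_pos.2 hB
  have hk : 0 < Real.sqrt (1 - ‖vs‖ ^ 2) / Real.sqrt (1 - ‖v‖ ^ 2) := div_pos hb ha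
  have hxs : xs = (Real.sqrt (1 - ‖vs‖ ^ 2) / Real.sqrt (1 - ‖v‖ ^ 2))⁻¹ := by
    simp only [xs, inv_div]
  have hval : xs ^ (-Γ) - Γ / (Γ - 1) * (Real.sqrt (1 - ‖vs‖ ^ 2) / Real.sqrt (1 - ‖v‖ ^ 2))
        * xs ^ (-Γ + 1)
      = -((Real.sqrt (1 - ‖vs‖ ^ 2) / Real.sqrt (1 - ‖v‖ ^ 2)) ^ Γ / (Γ - 1)) := by
    rw [hxs]
    exact phi_aux_val Γ hΓ1 hk
  constructor
  · intro x hx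
    have hlow := phi_aux_lower Γ hΓ1 hk hx
    simp only [φ]
    rw [hval]
    linarith
  · simp only [φ]
    rw [hval]
    exact phi_aux_nonneg_real Γ ‖v‖ ‖vs‖ ⟪v, vs⟫ hΓ1 hΓ2 hp0 hv hq0 hvs
      (real_inner_le_norm v vs)
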